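/- Consider ℝ² with the ℓ¹-norm and coordinatewise order. Let S(x₁,x₂) = ((1/2)x₁ + (1/3)x₂, (1/2)x₁ + (1/3)x₂) and T(x₁,x₂) = ((1/4)x₂, 0). Then S and T are positive contractions, T ≤ S, ‖S − T‖ = 1, and ‖S² − T²‖ < 1. -/

import Mathlib

private lemma l1norm_two (x : PiLp 1 (fun _ : Fin 2 => ℝ)) : ‖x‖ = |x 0| + |x 1| := by
  simp [PiLp.norm_eq_of_L1, Fin.sum_univ_two, Real.norm_eq_abs]

/-- The concrete example: `S(x₁,x₂) = (x₁/2 + x₂/3, x₁/2 + x₂/3)`,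
`T(x₁,x₂) = (x₂/4, 0)` on `ℝ²` with the `ℓ¹`-norm. Then `S` and `T` are positive
contractions, `T ≤ S`, `‖S - T‖ = 1` and `‖S² - T²‖ < 1`. -/
theorem concrete_example
    (S T : PiLp 1 (fun _ : Fin 2 => ℝ) →L[ℝ] PiLp 1 (fun _ : Fin 2 => ℝ))
    (hS : ∀ x : PiLp 1 (fun _ : Fin 2 => ℝ),
      S x = (WithLp.equiv 1 (Fin 2 → ℝ)).symm
        ![(1 / 2) * x 0 + (1 / 3) * x 1, (1 / 2) * x 0 + (1 / 3) * x 1])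
    (hT : ∀ x : PiLp 1 (fun _ : Fin 2 => ℝ),
      T x = (WithLp.equiv 1 (Fin 2 → ℝ)).symm ![(1 / 4) * x 1, 0]) :
    (∀ x : PiLp 1 (fun _ : Fin 2 => ℝ), (∀ i, 0 ≤ x i) → ∀ i, 0 ≤ S x i) ∧ ‖S‖ ≤ 1 ∧
    (∀ x : PiLp 1 (fun _ : Fin 2 => ℝ), (∀ i, 0 ≤ x i) → ∀ i, 0 ≤ T x i) ∧ ‖T‖ ≤ 1 ∧
    (∀ x : PiLp 1 (fun _ : Fin 2 => ℝ), (∀ i, 0 ≤ x i) → ∀ i, 0 ≤ (S x - T x) i) ∧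
    ‖S - T‖ = 1 ∧ ‖S ^ 2 - T ^ 2‖ < 1 := by
  have hS0 : ∀ x : PiLp 1 (fun _ : Fin 2 => ℝ), S x 0 = (1/2) * x 0 + (1/3) * x 1 := by
    intro x; rw [hS]; simp [WithLp.equiv_symm_apply, PiLp.toLp_apply]
  have hS1 : ∀ x : PiLp 1 (fun _ : Fin 2 => ℝ), S x 1 = (1/2) * x 0 + (1/3) * x 1 := by
    intro x; rw [hS]; simp [WithLp.equiv_symm_apply, PiLp.toLp_apply]
  have hT0 : ∀ x : PiLp 1 (fun _ : Fin 2 => ℝ), T x 0 = (1/4) * x 1 := by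
    intro x; rw [hT]; simp [WithLp.equiv_symm_apply, PiLp.toLp_apply]
  have hT1 : ∀ x : PiLp 1 (fun _ : Fin 2 => ℝ), T x 1 = 0 := by
    intro x; rw [hT]; simp [WithLp.equiv_symm_apply, PiLp.toLp_apply]
  refine ⟨?_, ?_, ?_, ?_, ?_, ?_, ?_⟩
  · intro x hx i
    fin_cases i
    · show (0:ℝ) ≤ S x 0; rw [hS0]; nlinarith [hx 0, hx 1]
    · show (0:ℝ) ≤ S x 1; rw [hS1]; nlinarith [hx 0, hx 1]
  · refine ContinuousLinearMap.opNorm_le_bound S zero_le_one fun x => ?_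
    rw [l1norm_two, hS0, hS1, l1norm_two, one_mul]
    have h0 := abs_add_le ((1/2) * x 0) ((1/3) * x 1)
    rw [abs_mul, abs_mul] at h0
    have := abs_nonneg (x 0); have := abs_nonneg (x 1)
    rw [abs_of_pos (by norm_num : (0:ℝ) < 1/2), abs_of_pos (by norm_num : (0:ℝ) < 1/3)] at h0
    linarith
  · intro x hx i
    fin_cases i
    · show (0:ℝ) ≤ T x 0; rw [hT0]; nlinarith [hx 0, hx 1]
    · show (0:ℝ) ≤ T x 1; rw [hT1]
  · refine ContinuousLinearMap.opNorm_le_bound T zero_le_one fun x => ?_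
    rw [l1norm_two, hT0, hT1, l1norm_two, one_mul, abs_mul]
    have := abs_nonneg (x 0); have := abs_nonneg (x 1)
    rw [abs_of_pos (by norm_num : (0:ℝ) < 1/4)]
    simp only [abs_zero]
    nlinarith
  · intro x hx i
    fin_cases i
    · show (0:ℝ) ≤ (S x - T x) 0
      simp only [PiLp.sub_apply, hS0, hT0]
      nlinarith [hx 0, hx 1]
    · show (0:ℝ) ≤ (S x - T x) 1
      simp only [PiLp.sub_apply, hS1, hT1]
      nlinarith [hx 0, hx 1]
  · have hle : ‖S - T‖ ≤ 1 := by
      refine ContinuousLinearMap.opNorm_le_bound _ zero_le_one fun x => ?_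
      have e0 : (S - T) x 0 = (1/2) * x 0 + (1/12) * x 1 := by
        simp only [ContinuousLinearMap.sub_apply, PiLp.sub_apply, hS0, hT0]; ring
      have e1 : (S - T) x 1 = (1/2) * x 0 + (1/3) * x 1 := by
        simp only [ContinuousLinearMap.sub_apply, PiLp.sub_apply, hS1, hT1]; ring
      rw [l1norm_two, e0, e1, l1norm_two, one_mul]
      have h0 := abs_add_le ((1/2) * x 0) ((1/12) * x 1)
      have h1 := abs_add_le ((1/2) * x 0) ((1/3) * x 1)
      rw [abs_mul, abs_mul] at h0 h1
      have := abs_nonneg (x 0); have := abs_nonneg (x 1)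
      rw [abs_of_pos (by norm_num : (0:ℝ) < 1/2), abs_of_pos (by norm_num : (0:ℝ) < 1/12)] at h0
      rw [abs_of_pos (by norm_num : (0:ℝ) < 1/2), abs_of_pos (by norm_num : (0:ℝ) < 1/3)] at h1
      nlinarith
    have hge : 1 ≤ ‖S - T‖ := by
      set e : PiLp 1 (fun _ : Fin 2 => ℝ) := (WithLp.equiv 1 (Fin 2 → ℝ)).symm ![1, 0] with he
      have he0 : e 0 = 1 := by simp [he, WithLp.equiv_symm_apply, PiLp.toLp_apply]
      have he1 : e 1 = 0 := by simp [he, WithLp.equiv_symm_apply, PiLp.toLp_apply]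
      have hne : ‖e‖ = 1 := by rw [l1norm_two, he0, he1]; norm_num
      have h := (S - T).le_opNorm e
      have e0 : (S - T) e 0 = 1/2 := by
        simp only [ContinuousLinearMap.sub_apply, PiLp.sub_apply, hS0, hT0, he0, he1]; ring
      have e1 : (S - T) e 1 = 1/2 := by
        simp only [ContinuousLinearMap.sub_apply, PiLp.sub_apply, hS1, hT1, he0, he1]; ring
      rw [hne, mul_one, l1norm_two, e0, e1,
        abs_of_pos (by norm_num : (0:ℝ) < 1/2)] at h
      linarith
    linarith
  · have hlt : ‖S ^ 2 - T ^ 2‖ ≤ 5/6 := by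
      refine ContinuousLinearMap.opNorm_le_bound _ (by norm_num) fun x => ?_
      have eS0 : (S ^ 2) x 0 = (5/12) * x 0 + (5/18) * x 1 := by
        show S (S x) 0 = _
        rw [hS0, hS0, hS1]; ring
      have eS1 : (S ^ 2) x 1 = (5/12) * x 0 + (5/18) * x 1 := by
        show S (S x) 1 = _
        rw [hS1, hS0, hS1]; ring
      have eT0 : (T ^ 2) x 0 = 0 := by
        show T (T x) 0 = _
        rw [hT0, hT1]; ring
      have eT1 : (T ^ 2) x 1 = 0 := by
        show T (T x) 1 = _
        rw [hT1]
      have e0 : (S ^ 2 - T ^ 2) x 0 = (5/12) * x 0 + (5/18) * x 1 := by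
        simp only [ContinuousLinearMap.sub_apply, PiLp.sub_apply, eS0, eT0]; ring
      have e1 : (S ^ 2 - T ^ 2) x 1 = (5/12) * x 0 + (5/18) * x 1 := by
        simp only [ContinuousLinearMap.sub_apply, PiLp.sub_apply, eS1, eT1]; ring
      rw [l1norm_two, e0, e1, l1norm_two]
      have h0 := abs_add_le ((5/12) * x 0) ((5/18) * x 1)
      rw [abs_mul, abs_of_pos (by norm_num : (0:ℝ) < 5/12), abs_mul,
        abs_of_pos (by norm_num : (0:ℝ) < 5/18)] at h0
      have := abs_nonneg (x 0); have := abs_nonneg (x 1)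
      nlinarith
    linarith
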